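/- arXiv:1407.7922 — 3 statements merged into one kernel-verified Lean document; each statement's English description precedes it below -/
import Mathlib

section
/- Let (b₁, r₁) and (b₂, r₂) be pairs of positive integers with 0 < bᵢ < rᵢ, and suppose b₁r₂ − b₂r₁ = 1. Set n = r₁ + r₂. Then Δ^n(b₁,r₁) + Δ^n(b₂,r₂) = Δ^n(b₁+b₂, r₁+r₂) + 1. -/
def Delta (n b r : ℕ) : ℤ :=
  let d : ℤ := (b * n / r : ℕ)
  d * b * n - (r * (d ^ 2 + d)) / 2

theorem stmt_1 (b₁ r₁ b₂ r₂ : ℕ) (hb₁ : 0 < b₁) (hr₁ : b₁ < r₁)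
    (hb₂ : 0 < b₂) (hr₂ : b₂ < r₂) (hprime : b₁ * r₂ = b₂ * r₁ + 1) :
    Delta (r₁ + r₂) b₁ r₁ + Delta (r₁ + r₂) b₂ r₂
      = Delta (r₁ + r₂) (b₁ + b₂) (r₁ + r₂) + 1 := by
  have h1 : b₁ * (r₁ + r₂) / r₁ = b₁ + b₂ := by
    apply Nat.div_eq_of_lt_le
    · nlinarith
    · nlinarith
  have h2 : b₂ * (r₁ + r₂) / r₂ = b₁ + b₂ - 1 := by
    apply Nat.div_eq_of_lt_le
    · have h : b₁ + b₂ - 1 + 1 = b₁ + b₂ := by omega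
      nlinarith [h]
    · have h : b₁ + b₂ - 1 + 1 = b₁ + b₂ := by omega
      nlinarith [h]
  have h3 : (b₁ + b₂) * (r₁ + r₂) / (r₁ + r₂) = b₁ + b₂ :=
    Nat.mul_div_cancel _ (by omega)
  simp only [Delta, h1, h2, h3]
  have hcast : ((b₁ + b₂ - 1 : ℕ) : ℤ) = (b₁ : ℤ) + b₂ - 1 := by
    push_cast [Nat.cast_sub (by omega : 1 ≤ b₁ + b₂)]; ring
  rw [hcast]
  push_cast
  set D : ℤ := (b₁ : ℤ) + b₂ with hD
  obtain ⟨E, hE0⟩ := Int.even_mul_succ_self D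
  have hE : D ^ 2 + D = 2 * E := by linear_combination hE0
  have hF : (D - 1) ^ 2 + (D - 1) = 2 * (E - D) := by linear_combination hE0
  rw [hE, hF]
  have key : ∀ (r x : ℤ), r * (2 * x) / 2 = r * x := fun r x => by
    rw [show r * (2 * x) = 2 * (r * x) by ring, Int.mul_ediv_cancel_left _ two_ne_zero]
  rw [key, key, key]
  have hp : (b₁ : ℤ) * r₂ = (b₂ : ℤ) * r₁ + 1 := by exact_mod_cast hprime
  linear_combination hp
end

section
/- Let (b₁, r₁) and (b₂, r₂) be pairs of positive integers with 0 < bᵢ < rᵢ. Then for every integer n ≥ 2, Δ^n(b₁,r₁) + Δ^n(b₂,r₂) ≥ Δ^n(b₁+b₂, r₁+r₂). -/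
lemma two_delta (n b r : ℕ) :
    2 * Delta n b r =
      2 * (((b * n / r : ℕ) : ℤ) * b * n) -
        r * (((b * n / r : ℕ) : ℤ) ^ 2 + ((b * n / r : ℕ) : ℤ)) := by
  unfold Delta
  set d : ℤ := ((b * n / r : ℕ) : ℤ) with hd
  have hev : (2 : ℤ) ∣ (r : ℤ) * (d ^ 2 + d) := by
    have h := Int.even_mul_succ_self d
    have h' : Even (d ^ 2 + d) := by
      have e : d * (d + 1) = d ^ 2 + d := by ring
      rwa [e] at h
    exact Dvd.dvd.mul_left h'.two_dvd _
  have hc := Int.mul_ediv_cancel' hev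
  simp only []
  linarith [hc]

lemma aux (b r n : ℕ) (hr : 0 < r) (δ : ℤ) :
    2 * (δ * b * n) - r * (δ ^ 2 + δ) ≤
      2 * (((b * n / r : ℕ) : ℤ) * b * n) -
        r * (((b * n / r : ℕ) : ℤ) ^ 2 + ((b * n / r : ℕ) : ℤ)) := by
  set m : ℤ := ((b * n / r : ℕ) : ℤ) with hm
  have key := Nat.div_add_mod (b * n) r
  have hmod : (b * n) % r < r := Nat.mod_lt _ hr
  have h1 : (r : ℤ) * m ≤ (b : ℤ) * n := by
    rw [hm]; exact_mod_cast (by omega : r * (b * n / r) ≤ b * n)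
  have h2 : (b : ℤ) * n < (r : ℤ) * (m + 1) := by
    rw [hm]; push_cast
    exact_mod_cast (by omega : (b * n : ℕ) < r * (b * n / r) + r)
  have hr' : (0 : ℤ) ≤ r := by positivity
  rcases lt_trichotomy δ m with h | rfl | h
  · have hb' : (r : ℤ) * (m + δ + 1) ≤ 2 * (b * n) := by
      nlinarith [mul_nonneg hr' (by linarith : (0:ℤ) ≤ m - δ - 1)]
    nlinarith [mul_nonneg (by linarith : (0:ℤ) ≤ m - δ) (by linarith : (0:ℤ) ≤ 2*(b*n) - r*(m+δ+1))]
  · exact le_rfl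
  · have hb' : 2 * ((b : ℤ) * n) ≤ (r : ℤ) * (m + δ + 1) := by
      nlinarith [mul_nonneg hr' (by linarith : (0:ℤ) ≤ δ - m - 1)]
    nlinarith [mul_nonneg (by linarith : (0:ℤ) ≤ δ - m) (by linarith : (0:ℤ) ≤ r*(m+δ+1) - 2*(b*n))]

theorem stmt_2 (b₁ r₁ b₂ r₂ : ℕ) (hb₁ : 0 < b₁) (hr₁ : b₁ < r₁)
    (hb₂ : 0 < b₂) (hr₂ : b₂ < r₂) (n : ℕ) (hn : 2 ≤ n) :
    Delta n (b₁ + b₂) (r₁ + r₂) ≤ Delta n b₁ r₁ + Delta n b₂ r₂ := by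
  set m : ℤ := (((b₁ + b₂) * n / (r₁ + r₂) : ℕ) : ℤ) with hm
  have e := two_delta n (b₁ + b₂) (r₁ + r₂)
  have e1 := two_delta n b₁ r₁
  have e2 := two_delta n b₂ r₂
  have a1 := aux b₁ r₁ n (by omega) m
  have a2 := aux b₂ r₂ n (by omega) m
  rw [← e1] at a1
  rw [← e2] at a2
  have ecomb : 2 * Delta n (b₁ + b₂) (r₁ + r₂) =
      (2 * (m * b₁ * n) - r₁ * (m ^ 2 + m)) + (2 * (m * b₂ * n) - r₂ * (m ^ 2 + m)) := by
    rw [e, ← hm]; push_cast; ring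
  linarith [a1, a2, ecomb]
end

section
/- Let (b₁, r₁) and (b₂, r₂) be pairs of positive integers with 0 < bᵢ < rᵢ, and let n ≥ 2 be an integer. Then Δ^n(b₁,r₁) + Δ^n(b₂,r₂) = Δ^n(b₁+b₂, r₁+r₂) if and only if there exists a non-negative integer δ such that both b₁/r₁ and b₂/r₂ lie in the closed interval [δ/n, (δ+1)/n]. -/
lemma gauss (d : ℕ) : 2 * ∑ k ∈ Finset.Ioc 0 d, (k:ℤ) = d*(d+1) := by
  induction d with
  | zero => simp
  | succ m ih =>
    rw [Finset.sum_Ioc_succ_top (Nat.zero_le _)]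
    push_cast
    push_cast at ih
    ring_nf
    ring_nf at ih
    linarith

lemma sum_max (n B r d : ℕ) (h1 : d*r ≤ B) (h2 : B < (d+1)*r) (h3 : d ≤ n) :
    ∑ k ∈ Finset.Icc 1 n, max ((B:ℤ) - k*r) 0 = d*B - r*((d:ℤ)^2+d)/2 := by
  have hIcc : Finset.Icc 1 n = Finset.Ioc 0 n := rfl
  rw [hIcc, ← Finset.sum_Ioc_consecutive _ (Nat.zero_le d) h3]
  have hA : ∀ k ∈ Finset.Ioc 0 d, max ((B:ℤ) - k*r) 0 = (B:ℤ) - k*r := by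
    intro k hk
    rw [Finset.mem_Ioc] at hk
    have h : k * r ≤ B := le_trans (Nat.mul_le_mul_right _ hk.2) h1
    have : (k:ℤ) * r ≤ B := by exact_mod_cast h
    omega
  have hB : ∀ k ∈ Finset.Ioc d n, max ((B:ℤ) - k*r) 0 = 0 := by
    intro k hk
    rw [Finset.mem_Ioc] at hk
    have h : B < k * r := lt_of_lt_of_le h2 (Nat.mul_le_mul_right _ hk.1)
    have : (B:ℤ) < k * r := by exact_mod_cast h
    omega
  rw [Finset.sum_congr rfl hA, Finset.sum_eq_zero hB, add_zero]
  rw [Finset.sum_sub_distrib]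
  have hcard : (Finset.Ioc 0 d).card = d := by simp
  rw [Finset.sum_const, hcard]
  have hsum : ∑ k ∈ Finset.Ioc 0 d, (k:ℤ)*r = (∑ k ∈ Finset.Ioc 0 d, (k:ℤ)) * r := by
    rw [Finset.sum_mul]
  rw [hsum]
  set t := ∑ k ∈ Finset.Ioc 0 d, (k:ℤ) with ht
  have h2t : (d:ℤ)^2 + d = 2 * t := by
    have hg := gauss d
    rw [← ht] at hg
    nlinarith [hg]
  rw [h2t, show (r:ℤ)*(2*t) = 2*(t*r) by ring, Int.mul_ediv_cancel_left _ two_ne_zero]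
  ring

lemma floor_facts (b r n : ℕ) (hr : 0 < r) :
    (b*n/r) * r ≤ b * n ∧ b * n < (b*n/r + 1) * r := by
  refine ⟨Nat.div_mul_le_self _ _, ?_⟩
  calc b*n < r * (b*n/r + 1) := Nat.lt_mul_div_succ _ hr
    _ = (b*n/r + 1) * r := mul_comm _ _

lemma Delta_eq (n b r : ℕ) (hbr : b < r) :
    Delta n b r = ∑ k ∈ Finset.Icc 1 n, max (((b:ℤ)*n) - k*r) 0 := by
  have hr : 0 < r := lt_of_le_of_lt (Nat.zero_le _) hbr
  obtain ⟨h1, h2⟩ := floor_facts b r n hr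
  set d := b * n / r with hd
  have h3 : d ≤ n := by
    have : b * n ≤ r * n := Nat.mul_le_mul_right _ (le_of_lt hbr)
    calc d = b * n / r := rfl
      _ ≤ r * n / r := Nat.div_le_div_right this
      _ = n := Nat.mul_div_cancel_left _ hr
  have key := sum_max n (b*n) r d h1 h2 h3
  push_cast at key
  rw [key]
  show (d:ℤ) * b * n - ((r:ℤ) * ((d:ℤ)^2 + d)) / 2 = _
  rw [mul_assoc]

lemma arith (b₁ r₁ b₂ r₂ n : ℕ) (hb₁ : 0 < b₁) (hr₁ : b₁ < r₁) (hb₂ : 0 < b₂)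
    (hr₂ : b₂ < r₂) (hn : 1 ≤ n) :
    (∀ k, 1 ≤ k → k ≤ n → ¬(k*r₁ < b₁*n ∧ b₂*n < k*r₂) ∧ ¬(b₁*n < k*r₁ ∧ k*r₂ < b₂*n))
    ↔ ∃ δ, δ*r₁ ≤ b₁*n ∧ b₁*n ≤ (δ+1)*r₁ ∧ δ*r₂ ≤ b₂*n ∧ b₂*n ≤ (δ+1)*r₂ := by
  have h0r₁ : 0 < r₁ := lt_trans hb₁ hr₁
  have h0r₂ : 0 < r₂ := lt_trans hb₂ hr₂
  have h0n : 0 < n := hn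
  constructor
  · intro H
    obtain ⟨f11, f12⟩ := floor_facts b₁ r₁ n h0r₁
    obtain ⟨f21, f22⟩ := floor_facts b₂ r₂ n h0r₂
    set δ₁ := b₁ * n / r₁ with hδ₁
    set δ₂ := b₂ * n / r₂ with hδ₂
    have hd1n : δ₁ < n := by
      rw [hδ₁, Nat.div_lt_iff_lt_mul h0r₁]
      calc b₁ * n < r₁ * n := mul_lt_mul_of_pos_right hr₁ h0n
        _ = n * r₁ := mul_comm _ _
    have hd2n : δ₂ < n := by
      rw [hδ₂, Nat.div_lt_iff_lt_mul h0r₂]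
      calc b₂ * n < r₂ * n := mul_lt_mul_of_pos_right hr₂ h0n
        _ = n * r₂ := mul_comm _ _
    rcases le_total δ₁ δ₂ with hle | hle
    · refine ⟨δ₁, f11, le_of_lt f12, le_trans (Nat.mul_le_mul_right _ hle) f21, ?_⟩
      by_contra hcon
      push_neg at hcon
      exact (H (δ₁+1) (Nat.succ_le_succ (Nat.zero_le _)) hd1n).2 ⟨f12, hcon⟩
    · refine ⟨δ₂, le_trans (Nat.mul_le_mul_right _ hle) f11, ?_, f21, le_of_lt f22⟩
      by_contra hcon
      push_neg at hcon
      exact (H (δ₂+1) (Nat.succ_le_succ (Nat.zero_le _)) hd2n).1 ⟨hcon, f22⟩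
  · rintro ⟨δ, h1, h2, h3, h4⟩ k hk1 hkn
    constructor
    · rintro ⟨ha, hb⟩
      have hk : k < δ + 1 := Nat.lt_of_mul_lt_mul_right (lt_of_lt_of_le ha h2)
      have : k * r₂ ≤ δ * r₂ := Nat.mul_le_mul_right _ (Nat.lt_succ_iff.mp hk)
      omega
    · rintro ⟨ha, hb⟩
      have hk : k < δ + 1 := Nat.lt_of_mul_lt_mul_right (lt_of_lt_of_le hb h4)
      have : k * r₁ ≤ δ * r₁ := Nat.mul_le_mul_right _ (Nat.lt_succ_iff.mp hk)
      omega

lemma term_k (b₁ r₁ b₂ r₂ k m : ℕ) :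
    (max (((b₁+b₂ : ℕ):ℤ)*m - k*((r₁+r₂ : ℕ))) 0
      = max ((b₁:ℤ)*m - k*r₁) 0 + max ((b₂:ℤ)*m - k*r₂) 0) ↔
    (¬(k*r₁ < b₁*m ∧ b₂*m < k*r₂) ∧ ¬(b₁*m < k*r₁ ∧ k*r₂ < b₂*m)) := by
  have e1 : (b₁:ℤ)*m - k*r₁ = ((b₁*m : ℕ):ℤ) - ((k*r₁ : ℕ):ℤ) := by push_cast; ring
  have e2 : (b₂:ℤ)*m - k*r₂ = ((b₂*m : ℕ):ℤ) - ((k*r₂ : ℕ):ℤ) := by push_cast; ring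
  have e3 : ((b₁+b₂ : ℕ):ℤ)*m - k*((r₁+r₂ : ℕ))
      = (((b₁*m : ℕ):ℤ) - ((k*r₁ : ℕ):ℤ)) + (((b₂*m : ℕ):ℤ) - ((k*r₂ : ℕ):ℤ)) := by
    push_cast; ring
  rw [e1, e2, e3]
  omega

lemma term_le (b₁ r₁ b₂ r₂ k m : ℕ) :
    max (((b₁+b₂ : ℕ):ℤ)*m - k*((r₁+r₂ : ℕ))) 0
      ≤ max ((b₁:ℤ)*m - k*r₁) 0 + max ((b₂:ℤ)*m - k*r₂) 0 := by
  have e3 : ((b₁+b₂ : ℕ):ℤ)*m - k*((r₁+r₂ : ℕ))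
      = ((b₁:ℤ)*m - k*r₁) + ((b₂:ℤ)*m - k*r₂) := by push_cast; ring
  rw [e3]
  generalize (b₁:ℤ)*m - k*r₁ = x
  generalize (b₂:ℤ)*m - k*r₂ = y
  omega

lemma q_side (b r δ n : ℕ) (hr : 0 < r) (hn : 0 < n) :
    ((δ:ℚ)/n ≤ (b:ℚ)/r ∧ (b:ℚ)/r ≤ ((δ:ℚ)+1)/n) ↔ (δ*r ≤ b*n ∧ b*n ≤ (δ+1)*r) := by
  have hrq : (0:ℚ) < r := by exact_mod_cast hr
  have hnq : (0:ℚ) < n := by exact_mod_cast hn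
  rw [div_le_div_iff₀ hnq hrq, div_le_div_iff₀ hrq hnq]
  constructor
  · rintro ⟨u, v⟩
    exact ⟨by exact_mod_cast u, by exact_mod_cast v⟩
  · rintro ⟨u, v⟩
    exact ⟨by exact_mod_cast u, by exact_mod_cast v⟩

theorem stmt_3 (b₁ r₁ b₂ r₂ : ℕ) (hb₁ : 0 < b₁) (hr₁ : b₁ < r₁)
    (hb₂ : 0 < b₂) (hr₂ : b₂ < r₂) (n : ℕ) (hn : 2 ≤ n) :
    Delta n b₁ r₁ + Delta n b₂ r₂ = Delta n (b₁ + b₂) (r₁ + r₂) ↔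
      ∃ δ : ℕ, ((δ : ℚ) / n ≤ (b₁ : ℚ) / r₁ ∧ (b₁ : ℚ) / r₁ ≤ ((δ : ℚ) + 1) / n) ∧
        ((δ : ℚ) / n ≤ (b₂ : ℚ) / r₂ ∧ (b₂ : ℚ) / r₂ ≤ ((δ : ℚ) + 1) / n) := by
  have h0r₁ : 0 < r₁ := lt_trans hb₁ hr₁
  have h0r₂ : 0 < r₂ := lt_trans hb₂ hr₂
  have h0n : 0 < n := lt_of_lt_of_le two_pos hn
  rw [Delta_eq n b₁ r₁ hr₁, Delta_eq n b₂ r₂ hr₂,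
    Delta_eq n (b₁+b₂) (r₁+r₂) (add_lt_add hr₁ hr₂), ← Finset.sum_add_distrib, eq_comm,
    Finset.sum_eq_sum_iff_of_le (fun k _ => term_le b₁ r₁ b₂ r₂ k n)]
  have main := arith b₁ r₁ b₂ r₂ n hb₁ hr₁ hb₂ hr₂ h0n
  constructor
  · intro h
    obtain ⟨δ, u1, u2, u3, u4⟩ := main.mp (fun k hk1 hkn =>
      (term_k b₁ r₁ b₂ r₂ k n).mp (h k (Finset.mem_Icc.mpr ⟨hk1, hkn⟩)))
    exact ⟨δ, (q_side b₁ r₁ δ n h0r₁ h0n).mpr ⟨u1, u2⟩, (q_side b₂ r₂ δ n h0r₂ h0n).mpr ⟨u3, u4⟩⟩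
  · rintro ⟨δ, hq1, hq2⟩
    have ⟨u1, u2⟩ := (q_side b₁ r₁ δ n h0r₁ h0n).mp hq1
    have ⟨u3, u4⟩ := (q_side b₂ r₂ δ n h0r₂ h0n).mp hq2
    intro k hk
    rw [Finset.mem_Icc] at hk
    exact (term_k b₁ r₁ b₂ r₂ k n).mpr (main.mpr ⟨δ, u1, u2, u3, u4⟩ k hk.1 hk.2)
end
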